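/- Flag-state squasher (statistics preservation): Let H = H_s ⊕ H_l, and let {M_y = M_{y,s} ⊕ M_{y,l} : y = 1,…,J} be a POVM on H whose elements are block-diagonal with respect to this decomposition. Define the squashed POVM elements M̃_y = M_{y,s} ⊕ |y⟩⟨y| on H_s ⊕ C^J, and the squashing map Λ(ρ) = ρ_ss ⊕ Σ_{y=1}^J Tr(ρ_ll M_{y,l}) |y⟩⟨y|. Then for every density operator ρ on H and every y, Tr(ρ M_y) = Tr(Λ(ρ) M̃_y). -/

import Mathlib

open Matrix
open scoped ComplexOrder

/-- The flag-state squashing map `Λ`. -/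
noncomputable def flagSquash {ds dl J : ℕ}
    (M : Fin J → Matrix (Fin dl) (Fin dl) ℂ)
    (ρ : Matrix (Fin ds ⊕ Fin dl) (Fin ds ⊕ Fin dl) ℂ) :
    Matrix (Fin ds ⊕ Fin J) (Fin ds ⊕ Fin J) ℂ :=
  Matrix.fromBlocks ρ.toBlocks₁₁ 0 0
    (∑ y : Fin J, (ρ.toBlocks₂₂ * M y).trace • Matrix.single y y 1)

lemma trace_fromBlocks' {m n : Type*} [Fintype m] [Fintype n]
    (A : Matrix m m ℂ) (B : Matrix m n ℂ) (C : Matrix n m ℂ) (D : Matrix n n ℂ) :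
    (Matrix.fromBlocks A B C D).trace = A.trace + D.trace := by
  simp [Matrix.trace, Matrix.diag, Fintype.sum_sum_type, Matrix.fromBlocks]

/-- Flag-state squasher: statistics preservation.  For a block-diagonal POVM
`M_y = M_{y,s} ⊕ M_{y,l}` and squashed POVM `M̃_y = M_{y,s} ⊕ |y⟩⟨y|`,
we have `Tr(ρ M_y) = Tr(Λ(ρ) M̃_y)` for every density operator `ρ`. -/
theorem flagSquash_statistics_preserving {ds dl J : ℕ}
    (Ms : Fin J → Matrix (Fin ds) (Fin ds) ℂ)
    (Ml : Fin J → Matrix (Fin dl) (Fin dl) ℂ)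
    (hMsPos : ∀ y, (Ms y).PosSemidef) (hMlPos : ∀ y, (Ml y).PosSemidef)
    (hMsSum : ∑ y, Ms y = 1) (hMlSum : ∑ y, Ml y = 1)
    (ρ : Matrix (Fin ds ⊕ Fin dl) (Fin ds ⊕ Fin dl) ℂ)
    (hρ : ρ.PosSemidef) (hρtr : ρ.trace = 1) (y : Fin J) :
    (ρ * Matrix.fromBlocks (Ms y) 0 0 (Ml y)).trace
      = (flagSquash Ml ρ *
          Matrix.fromBlocks (Ms y) 0 0 (Matrix.single y y 1)).trace := by
  conv_lhs => rw [← Matrix.fromBlocks_toBlocks ρ]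
  rw [flagSquash, Matrix.fromBlocks_multiply, Matrix.fromBlocks_multiply,
    trace_fromBlocks', trace_fromBlocks']
  simp only [Matrix.mul_zero, Matrix.zero_mul, add_zero, zero_add, Matrix.sum_mul,
    Matrix.trace_sum]
  congr 1
  rw [Finset.sum_eq_single y]
  · rw [Matrix.smul_mul, Matrix.trace_smul, Matrix.single_mul_single_same,
      one_mul, Matrix.trace_single_eq_same, smul_eq_mul, mul_one]
  · intro z _ hz
    rw [Matrix.smul_mul, Matrix.single_mul_single_of_ne (h := hz)]
    simp
  · simp
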